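/- Let N₁ and N₂ be positive integers, Δx₁, Δx₂ > 0, Δτ > 0, T > 0, δ ≥ 0, K ≥ 0, and let g̃ : (ℤ/N₁ℤ) × (ℤ/N₂ℤ) → ℝ satisfy Δx₁ Δx₂ · ∑_{(j,k)} max(−g̃(j, k), 0) ≤ δ · Δτ / T. For w : (ℤ/N₁ℤ) × (ℤ/N₂ℤ) → ℝ define (G w)(ℓ, m) = Δx₁ Δx₂ · ∑_{(j,k)} g̃(ℓ − j, m − k) · w(j, k). If v, u : (ℤ/N₁ℤ) × (ℤ/N₂ℤ) → ℝ satisfy u(j, k) ≤ v(j, k) ≤ u(j, k) + K for all (j, k), then (G v)(ℓ, m) − (G u)(ℓ, m) ≥ −K · δ · Δτ / T for all (ℓ, m). -/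

import Mathlib

/-- δ-monotonicity of the truncated Fourier time-advance operator: if the
grid-scaled mass of the negative parts of the weights is at most `δ Δτ / T`,
then one application of the circular convolution operator violates the
discrete comparison principle by at most `K δ Δτ / T`, where `K` bounds the
pointwise gap between the two ordered solutions. -/
theorem delta_monotonicity
    (N₁ N₂ : ℕ) [NeZero N₁] [NeZero N₂]
    (Δx₁ Δx₂ Δτ T δ K : ℝ)
    (hΔx₁ : 0 < Δx₁) (hΔx₂ : 0 < Δx₂) (hΔτ : 0 < Δτ) (hT : 0 < T)
    (hδ : 0 ≤ δ) (hK : 0 ≤ K)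
    (g : ZMod N₁ × ZMod N₂ → ℝ)
    (hneg : Δx₁ * Δx₂ * ∑ jk : ZMod N₁ × ZMod N₂, max (-g jk) 0 ≤ δ * Δτ / T)
    (v u : ZMod N₁ × ZMod N₂ → ℝ)
    (hvu : ∀ jk : ZMod N₁ × ZMod N₂, u jk ≤ v jk ∧ v jk ≤ u jk + K) :
    ∀ ℓm : ZMod N₁ × ZMod N₂,
      Δx₁ * Δx₂ * ∑ jk : ZMod N₁ × ZMod N₂, g (ℓm.1 - jk.1, ℓm.2 - jk.2) * v jk -
        Δx₁ * Δx₂ * ∑ jk : ZMod N₁ × ZMod N₂, g (ℓm.1 - jk.1, ℓm.2 - jk.2) * u jk ≥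
          -(K * δ * Δτ / T) := by
  intro ℓm
  set s : ZMod N₁ × ZMod N₂ → ZMod N₁ × ZMod N₂ :=
    fun jk => (ℓm.1 - jk.1, ℓm.2 - jk.2) with hs
  have hsinv : Function.Involutive s := by
    intro jk; simp [hs]
  -- reindexing for the negative-part mass
  have hre : ∑ jk : ZMod N₁ × ZMod N₂, max (-g (s jk)) 0
      = ∑ jk : ZMod N₁ × ZMod N₂, max (-g jk) 0 :=
    Fintype.sum_bijective s hsinv.bijective _ _ (fun _ => rfl)
  -- pointwise bound
  have hterm : ∀ jk : ZMod N₁ × ZMod N₂,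
      -(max (-g (s jk)) 0 * K) ≤ g (s jk) * (v jk - u jk) := by
    intro jk
    obtain ⟨h1, h2⟩ := hvu jk
    have hd0 : 0 ≤ v jk - u jk := by linarith
    have hdK : v jk - u jk ≤ K := by linarith
    rcases le_or_gt 0 (g (s jk)) with h | h
    · have : max (-g (s jk)) 0 * K ≥ 0 := mul_nonneg (le_max_right _ _) hK
      nlinarith [mul_nonneg h hd0]
    · have hmax : max (-g (s jk)) 0 = -g (s jk) := max_eq_left (by linarith)
      rw [hmax]
      nlinarith
  have hsum : -(∑ jk : ZMod N₁ × ZMod N₂, max (-g jk) 0) * K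
      ≤ ∑ jk : ZMod N₁ × ZMod N₂, g (s jk) * (v jk - u jk) := by
    rw [← hre]
    calc -(∑ jk : ZMod N₁ × ZMod N₂, max (-g (s jk)) 0) * K
        = ∑ jk : ZMod N₁ × ZMod N₂, -(max (-g (s jk)) 0 * K) := by
          rw [neg_mul, Finset.sum_mul, ← Finset.sum_neg_distrib]
      _ ≤ _ := Finset.sum_le_sum fun jk _ => hterm jk
  have key : Δx₁ * Δx₂ * ∑ jk : ZMod N₁ × ZMod N₂, g (s jk) * v jk -
      Δx₁ * Δx₂ * ∑ jk : ZMod N₁ × ZMod N₂, g (s jk) * u jk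
      = Δx₁ * Δx₂ * ∑ jk : ZMod N₁ × ZMod N₂, g (s jk) * (v jk - u jk) := by
    rw [← mul_sub, ← Finset.sum_sub_distrib]
    ring_nf
  show Δx₁ * Δx₂ * ∑ jk : ZMod N₁ × ZMod N₂, g (s jk) * v jk -
      Δx₁ * Δx₂ * ∑ jk : ZMod N₁ × ZMod N₂, g (s jk) * u jk ≥ -(K * δ * Δτ / T)
  rw [key]
  have h1 : Δx₁ * Δx₂ * (-(∑ jk : ZMod N₁ × ZMod N₂, max (-g jk) 0) * K)
      ≤ Δx₁ * Δx₂ * ∑ jk : ZMod N₁ × ZMod N₂, g (s jk) * (v jk - u jk) :=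
    mul_le_mul_of_nonneg_left hsum (by positivity)
  have h2 : -(K * δ * Δτ / T) ≤ Δx₁ * Δx₂ *
      (-(∑ jk : ZMod N₁ × ZMod N₂, max (-g jk) 0) * K) := by
    have := mul_le_mul_of_nonneg_left hneg hK
    ring_nf at this ⊢
    linarith
  linarith
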